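/- The two forms of input-output determinacy are equivalent: for a fixed FLIF expression α satisfying the inertia property and the free variable property, the statement 'whenever (ν₁,ν₂) ∈ ⟦α⟧_D and ν₁′ = ν₁ on I(α), there exists ν₂′ with ν₂′ = ν₂ on O(α) and (ν₁′,ν₂′) ∈ ⟦α⟧_D' holds if and only if the statement 'whenever (ν₁,ν₂) ∈ ⟦α⟧_D and ν₁′ = ν₁ on I(α) and outside O(α), then (ν₁′,ν₂) ∈ ⟦α⟧_D' holds. -/
import Mathlib


/-- FLIF expressions over relation names `ρ`, variables `V`, and domain `D`. -/
inductive FLIF (ρ V D : Type) : Type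
  | rel (R : ρ) (xs ys : List V)
  | eqVar (x y : V)
  | eqConst (x : V) (c : D)
  | assignVar (x y : V)
  | assignConst (x : V) (c : D)
  | comp (a b : FLIF ρ V D)
  | union (a b : FLIF ρ V D)
  | diff (a b : FLIF ρ V D)

namespace FLIF

variable {ρ V D : Type}

/-- Dynamic semantics of FLIF: a binary relation on valuations `V → D`,
given a database instance `I` assigning to each relation name a set of tuples. -/
def sem (I : ρ → Set (List D)) [DecidableEq V] : FLIF ρ V D → (V → D) → (V → D) → Prop
  | rel R xs ys, ν₁, ν₂ =>
      (xs.map ν₁ ++ ys.map ν₂) ∈ I R ∧ ∀ v : V, v ∉ ys → ν₁ v = ν₂ v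
  | eqVar x y, ν₁, ν₂ => ν₁ = ν₂ ∧ ν₁ x = ν₁ y
  | eqConst x c, ν₁, ν₂ => ν₁ = ν₂ ∧ ν₁ x = c
  | assignVar x y, ν₁, ν₂ => ν₂ = Function.update ν₁ x (ν₁ y)
  | assignConst x c, ν₁, ν₂ => ν₂ = Function.update ν₁ x c
  | comp a b, ν₁, ν₂ => ∃ ν, sem I a ν₁ ν ∧ sem I b ν ν₂
  | union a b, ν₁, ν₂ => sem I a ν₁ ν₂ ∨ sem I b ν₁ ν₂
  | diff a b, ν₁, ν₂ => sem I a ν₁ ν₂ ∧ ¬ sem I b ν₁ ν₂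

variable [DecidableEq V]

/-- Syntactic output variables `O(α)`. -/
def outs : FLIF ρ V D → Finset V
  | rel _ _ ys => ys.toFinset
  | eqVar _ _ => ∅
  | eqConst _ _ => ∅
  | assignVar x _ => {x}
  | assignConst x _ => {x}
  | comp a b => outs a ∪ outs b
  | union a b => outs a ∪ outs b
  | diff a _ => outs a

/-- Syntactic input variables `I(α)`. -/
def inps : FLIF ρ V D → Finset V
  | rel _ xs _ => xs.toFinset
  | eqVar x y => {x, y}
  | eqConst x _ => {x}
  | assignVar _ y => {y}
  | assignConst _ _ => ∅
  | comp a b => inps a ∪ (inps b \ outs a)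
  | union a b => inps a ∪ inps b ∪ symmDiff (outs a) (outs b)
  | diff a b => inps a ∪ inps b ∪ symmDiff (outs a) (outs b)

/-- Free variables of an expression: `vars(α) = I(α) ∪ O(α)`. -/
def vars (α : FLIF ρ V D) : Finset V := inps α ∪ outs α

/-- `α` is io-disjoint: every subexpression `β` of `α` (including `α` itself)
satisfies `I(β) ∩ O(β) = ∅`. -/
def ioDisjoint : FLIF ρ V D → Prop
  | comp a b => ioDisjoint a ∧ ioDisjoint b ∧ inps (comp a b) ∩ outs (comp a b) = ∅
  | union a b => ioDisjoint a ∧ ioDisjoint b ∧ inps (union a b) ∩ outs (union a b) = ∅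
  | diff a b => ioDisjoint a ∧ ioDisjoint b ∧ inps (diff a b) ∩ outs (diff a b) = ∅
  | α => inps α ∩ outs α = ∅

end FLIF

/-- The two forms of input-output determinacy are equivalent, for a fixed
expression `α` satisfying the inertia property and the free variable property. -/
theorem determinacy_forms_equiv {ρ V D : Type} [DecidableEq V] (I : ρ → Set (List D))
    (α : FLIF ρ V D)
    (hInertia : ∀ ν₁ ν₂ : V → D, FLIF.sem I α ν₁ ν₂ →
      ∀ v ∉ FLIF.outs α, ν₁ v = ν₂ v)
    (hFV : ∀ ν₁ ν₂ ν₁' ν₂' : V → D, FLIF.sem I α ν₁ ν₂ →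
      (∀ v ∈ FLIF.vars α, ν₁' v = ν₁ v) →
      (∀ v ∈ FLIF.vars α, ν₂' v = ν₂ v) →
      (∀ v ∉ FLIF.vars α, ν₂' v = ν₁' v) →
      FLIF.sem I α ν₁' ν₂') :
    (∀ ν₁ ν₂ ν₁' : V → D, FLIF.sem I α ν₁ ν₂ →
        (∀ v ∈ FLIF.inps α, ν₁' v = ν₁ v) →
        ∃ ν₂' : V → D, (∀ v ∈ FLIF.outs α, ν₂' v = ν₂ v) ∧ FLIF.sem I α ν₁' ν₂')
    ↔
    (∀ ν₁ ν₂ ν₁' : V → D, FLIF.sem I α ν₁ ν₂ →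
        (∀ v ∈ FLIF.inps α, ν₁' v = ν₁ v) →
        (∀ v ∉ FLIF.outs α, ν₁' v = ν₁ v) →
        FLIF.sem I α ν₁' ν₂) := by
  constructor
  · intro h1 ν₁ ν₂ ν₁' hsem hin hout
    obtain ⟨ν₂', hO, hsem'⟩ := h1 ν₁ ν₂ ν₁' hsem hin
    refine hFV ν₁' ν₂' ν₁' ν₂ hsem' (fun v _ => rfl) ?_ ?_
    · intro v hv
      by_cases hvO : v ∈ FLIF.outs α
      · exact (hO v hvO).symm
      · calc ν₂ v = ν₁ v := (hInertia ν₁ ν₂ hsem v hvO).symm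
          _ = ν₁' v := (hout v hvO).symm
          _ = ν₂' v := hInertia ν₁' ν₂' hsem' v hvO
    · intro v hv
      have hvO : v ∉ FLIF.outs α := fun h =>
        hv (Finset.mem_union_right _ h)
      calc ν₂ v = ν₁ v := (hInertia ν₁ ν₂ hsem v hvO).symm
        _ = ν₁' v := (hout v hvO).symm
  · intro h2 ν₁ ν₂ ν₁' hsem hin
    set σ : V → D := fun v => if v ∈ FLIF.outs α then ν₁' v else ν₁ v with hσ
    have hσin : ∀ v ∈ FLIF.inps α, σ v = ν₁ v := by
      intro v hv
      by_cases hvO : v ∈ FLIF.outs α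
      · simp only [hσ, if_pos hvO]; exact hin v hv
      · simp only [hσ, if_neg hvO]
    have hσout : ∀ v ∉ FLIF.outs α, σ v = ν₁ v := by
      intro v hv; simp only [hσ, if_neg hv]
    have hsemσ : FLIF.sem I α σ ν₂ := h2 ν₁ ν₂ σ hsem hσin hσout
    refine ⟨fun v => if v ∈ FLIF.outs α then ν₂ v else ν₁' v, ?_, ?_⟩
    · intro v hv; simp [if_pos hv]
    · refine hFV σ ν₂ ν₁' _ hsemσ ?_ ?_ ?_
      · intro v hv
        by_cases hvO : v ∈ FLIF.outs α
        · simp only [hσ, if_pos hvO]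
        · simp only [hσ, if_neg hvO]
          rcases Finset.mem_union.mp hv with hvi | hvo
          · exact hin v hvi
          · exact absurd hvo hvO
      · intro v hv
        by_cases hvO : v ∈ FLIF.outs α
        · simp [if_pos hvO]
        · simp only [if_neg hvO]
          calc ν₁' v = ν₁ v := by
                rcases Finset.mem_union.mp hv with hvi | hvo
                · exact hin v hvi
                · exact absurd hvo hvO
            _ = σ v := (hσout v hvO).symm
            _ = ν₂ v := hInertia σ ν₂ hsemσ v hvO
      · intro v hv
        have hvO : v ∉ FLIF.outs α := fun h => hv (Finset.mem_union_right _ h)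
        simp [if_neg hvO]
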